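/- Let I : F_2^n → {-1,1} denote the (±1-valued) indicator of the Hamming ball of radius 1 centered at 0: I(x) = -1 if |x| ≤ 1 and I(x) = 1 otherwise. Then the spectral norm of I satisfies ‖I‖_1 = Ω(√n). -/

import Mathlib

open Finset Matrix

noncomputable def chi {n : ℕ} (S x : Fin n → ZMod 2) : ℝ :=
  (-1 : ℝ) ^ (∑ i, S i * x i : ZMod 2).val

noncomputable def fhat {n : ℕ} (f : (Fin n → ZMod 2) → ℝ) (S : Fin n → ZMod 2) : ℝ :=
  (∑ x : Fin n → ZMod 2, f x * chi S x) / 2 ^ n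

noncomputable def hamDist {n : ℕ} (f g : (Fin n → ZMod 2) → ℝ) : ℝ :=
  ((Finset.univ.filter fun x => f x ≠ g x).card : ℝ) / 2 ^ n

noncomputable def specNorm {n : ℕ} (f : (Fin n → ZMod 2) → ℝ) : ℝ :=
  ∑ S : Fin n → ZMod 2, |fhat f S|

noncomputable def apxNorm {n : ℕ} (f : (Fin n → ZMod 2) → ℝ) (α : ℝ) : ℝ :=
  sInf {t | ∃ p : (Fin n → ZMod 2) → ℝ, (∀ x, |f x - p x| ≤ α) ∧ t = specNorm p}

noncomputable def linDist {n : ℕ} (f g : (Fin n → ZMod 2) → ℝ) : ℝ :=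
  ⨅ M : GL (Fin n) (ZMod 2),
    hamDist (fun x => f ((M : Matrix (Fin n) (Fin n) (ZMod 2)) *ᵥ x)) g

noncomputable def ballInd (n : ℕ) : (Fin n → ZMod 2) → ℝ := fun x =>
  if (Finset.univ.filter fun i => x i ≠ 0).card ≤ 1 then -1 else 1

noncomputable def eps (a : ZMod 2) : ℝ := (-1 : ℝ) ^ a.val

lemma zmod2_cases : ∀ a : ZMod 2, a = 0 ∨ a = 1 := by decide

lemma eps_zero : eps 0 = 1 := by simp [eps]
lemma eps_one : eps 1 = -1 := by
  have : (1 : ZMod 2).val = 1 := rfl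
  simp [eps, this]

lemma eps_add (a b : ZMod 2) : eps (a + b) = eps a * eps b := by
  rcases zmod2_cases a with h | h <;> rcases zmod2_cases b with h' | h' <;>
    subst h <;> subst h' <;>
    simp only [add_zero, zero_add, eps_zero, eps_one, one_mul, mul_one, neg_mul, neg_neg] <;>
    first
      | rfl
      | (rw [show ((1:ZMod 2) + 1) = 0 from rfl, eps_zero])

lemma eps_sq (a : ZMod 2) : eps a * eps a = 1 := by
  rcases zmod2_cases a with h | h <;> subst h <;> simp [eps_zero, eps_one]

lemma sum_zmod2 (f : ZMod 2 → ℝ) : ∑ a : ZMod 2, f a = f 0 + f 1 := by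
  rw [show (univ : Finset (ZMod 2)) = {0, 1} by decide]
  rw [Finset.sum_insert (by decide), Finset.sum_singleton]

lemma eps_sum {ι : Type*} [DecidableEq ι] (s : Finset ι) (g : ι → ZMod 2) :
    eps (∑ i ∈ s, g i) = ∏ i ∈ s, eps (g i) := by
  induction s using Finset.induction with
  | empty => simp [eps_zero]
  | insert _ _ h ih => rw [Finset.sum_insert h, Finset.prod_insert h, eps_add, ih]

lemma chi_eq_prod {n : ℕ} (S x : Fin n → ZMod 2) :
    chi S x = ∏ i, eps (S i * x i) := by
  rw [chi, ← eps_sum]; rfl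

lemma sum_chi {n : ℕ} (S : Fin n → ZMod 2) :
    ∑ x : Fin n → ZMod 2, chi S x = if S = 0 then (2:ℝ)^n else 0 := by
  have h : ∑ x : Fin n → ZMod 2, chi S x = ∏ i, (1 + eps (S i)) := by
    simp_rw [chi_eq_prod]
    rw [show (univ : Finset (Fin n → ZMod 2)) = Fintype.piFinset (fun _ => (univ : Finset (ZMod 2))) from (Fintype.piFinset_univ).symm,
      ← Finset.prod_univ_sum (fun _ => (univ : Finset (ZMod 2))) (fun i a => eps (S i * a))]
    congr 1; funext i
    rw [sum_zmod2]
    simp [eps_zero]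
  rw [h]
  by_cases hS : S = 0
  · subst hS; simp [eps_zero]; norm_num
  · have : ∃ i, S i ≠ 0 := by
      by_contra hc; push_neg at hc; exact hS (funext hc)
    obtain ⟨i, hi⟩ := this
    have : S i = 1 := (zmod2_cases (S i)).resolve_left hi
    rw [if_neg hS]
    exact Finset.prod_eq_zero (Finset.mem_univ i) (by rw [this, eps_one]; ring)

noncomputable def wgt {n : ℕ} (S : Fin n → ZMod 2) : ℝ := ∑ i, eps (S i)

lemma ball_finset (n : ℕ) :
    (univ.filter fun x : Fin n → ZMod 2 => (univ.filter fun i => x i ≠ 0).card ≤ 1)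
      = insert 0 (univ.image fun i : Fin n => Pi.single i (1 : ZMod 2)) := by
  ext x
  simp only [mem_filter, mem_univ, true_and, mem_insert, mem_image]
  constructor
  · intro h
    interval_cases hc : (univ.filter fun i => x i ≠ 0).card
    · left
      have he : (univ.filter fun i => x i ≠ 0) = ∅ := Finset.card_eq_zero.mp hc
      funext i
      show x i = 0
      by_contra hi
      have : i ∈ (univ.filter fun i => x i ≠ 0) := by simp [hi]
      simp [he] at this
    · right
      obtain ⟨i, hi⟩ := Finset.card_eq_one.mp hc
      refine ⟨i, ?_⟩
      have hxi : x i ≠ 0 := by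
        have : i ∈ (univ.filter fun i => x i ≠ 0) := by rw [hi]; exact Finset.mem_singleton_self i
        simpa using this
      funext j
      by_cases hj : j = i
      · subst hj
        rw [Pi.single_eq_same]
        exact ((zmod2_cases (x j)).resolve_left hxi).symm
      · rw [Pi.single_eq_of_ne hj]
        by_contra hxj
        have : j ∈ (univ.filter fun i => x i ≠ 0) := by simp [Ne.symm, hxj]
        rw [hi, Finset.mem_singleton] at this
        exact hj this
  · rintro (rfl | ⟨i, rfl⟩)
    · simp
    · have hsub : (univ.filter fun j => (Pi.single i (1:ZMod 2) : Fin n → ZMod 2) j ≠ 0) ⊆ {i} := by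
        intro j hj
        simp only [mem_filter] at hj
        rw [Finset.mem_singleton]
        by_contra hji
        exact hj.2 (by simp [Pi.single_eq_of_ne hji])
      calc (univ.filter fun j => (Pi.single i (1:ZMod 2) : Fin n → ZMod 2) j ≠ 0).card ≤ ({i} : Finset (Fin n)).card :=
            Finset.card_le_card hsub
        _ = 1 := Finset.card_singleton i

lemma chi_zero {n : ℕ} (S : Fin n → ZMod 2) : chi S 0 = 1 := by
  simp [chi]

lemma chi_single {n : ℕ} (S : Fin n → ZMod 2) (i : Fin n) :
    chi S (Pi.single i (1 : ZMod 2)) = eps (S i) := by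
  rw [chi, eps]
  congr 2
  rw [Finset.sum_eq_single i]
  · rw [Pi.single_eq_same, mul_one]
  · intro j _ hj; rw [Pi.single_eq_of_ne hj, mul_zero]
  · intro h; exact absurd (Finset.mem_univ i) h

lemma sum_ball_chi {n : ℕ} (S : Fin n → ZMod 2) :
    ∑ x ∈ (univ.filter fun x : Fin n → ZMod 2 => (univ.filter fun i => x i ≠ 0).card ≤ 1),
      chi S x = 1 + wgt S := by
  rw [ball_finset]
  have h0 : (0 : Fin n → ZMod 2) ∉ univ.image fun i : Fin n => Pi.single i (1 : ZMod 2) := by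
    simp only [mem_image, not_exists]
    rintro i ⟨-, hi⟩
    have := congrFun hi i
    rw [Pi.single_eq_same] at this
    exact one_ne_zero this
  rw [Finset.sum_insert h0, chi_zero, Finset.sum_image, wgt]
  · simp_rw [chi_single]
  · intro i _ j _ hij
    by_contra hne
    have := congrFun hij i
    dsimp only at this
    rw [Pi.single_eq_same] at this
    rw [show (Pi.single j 1 : Fin n → ZMod 2) i = 0 from Pi.single_eq_of_ne (fun h => hne h) 1] at this
    exact one_ne_zero this

lemma fhat_ballInd {n : ℕ} (S : Fin n → ZMod 2) :
    fhat (ballInd n) S = ((if S = 0 then (2:ℝ)^n else 0) - 2 * (1 + wgt S)) / 2 ^ n := by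
  rw [fhat]
  congr 1
  have key : ∀ x : Fin n → ZMod 2, ballInd n x * chi S x =
      chi S x - 2 * (if (univ.filter fun i => x i ≠ 0).card ≤ 1 then chi S x else 0) := by
    intro x
    rw [ballInd]
    by_cases h : (univ.filter fun i => x i ≠ 0).card ≤ 1 <;> simp [h] <;> ring
  simp_rw [key]
  rw [Finset.sum_sub_distrib, sum_chi, ← Finset.mul_sum, ← Finset.sum_filter, sum_ball_chi]

lemma sum_cons (n : ℕ) (F : (Fin (n+1) → ZMod 2) → ℝ) :
    ∑ S : Fin (n+1) → ZMod 2, F S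
      = ∑ a : ZMod 2, ∑ s : Fin n → ZMod 2, F (Fin.cons a s) := by
  rw [← (Fintype.sum_equiv (Fin.consEquiv fun _ => ZMod 2)
    (fun p => F (Fin.cons p.1 p.2)) F (fun p => rfl)), Fintype.sum_prod_type]

lemma wgt_cons {n : ℕ} (a : ZMod 2) (s : Fin n → ZMod 2) :
    wgt (Fin.cons a s) = eps a + wgt s := by
  rw [wgt, wgt, Fin.sum_univ_succ]
  simp

lemma card_cube (n : ℕ) : (Fintype.card (Fin n → ZMod 2) : ℝ) = 2 ^ n := by
  rw [Fintype.card_fun]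
  simp

lemma Pconst (n : ℕ) (c : ℝ) : ∑ _S : Fin n → ZMod 2, c = c * 2 ^ n := by
  rw [Finset.sum_const, Finset.card_univ, nsmul_eq_mul, ← card_cube n]; ring

lemma P0 (n : ℕ) : ∑ _S : Fin n → ZMod 2, (1:ℝ) = 2 ^ n := by
  rw [Pconst, one_mul]

lemma P1 (n : ℕ) : ∑ S : Fin n → ZMod 2, wgt S = 0 := by
  induction n with
  | zero => simp [wgt]
  | succ n ih =>
    rw [sum_cons n (fun S => wgt S)]
    rw [sum_zmod2]
    simp_rw [wgt_cons, eps_zero, eps_one]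
    rw [Finset.sum_add_distrib, Finset.sum_add_distrib, P0, ih]
    simp

lemma P2 (n : ℕ) : ∑ S : Fin n → ZMod 2, (wgt S) ^ 2 = n * 2 ^ n := by
  induction n with
  | zero => simp [wgt]
  | succ n ih =>
    rw [sum_cons n (fun S => wgt S ^ 2), sum_zmod2]
    simp_rw [wgt_cons, eps_zero, eps_one]
    have : ∀ w : ℝ, (1 + w)^2 + (-1 + w)^2 = 2 + 2 * w^2 := by intro w; ring
    rw [← Finset.sum_add_distrib]
    simp_rw [this]
    rw [Finset.sum_add_distrib, ← Finset.mul_sum, ih, Pconst]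
    push_cast
    ring

lemma P3 (n : ℕ) : ∑ S : Fin n → ZMod 2, (wgt S) ^ 3 = 0 := by
  induction n with
  | zero => simp [wgt]
  | succ n ih =>
    rw [sum_cons n (fun S => wgt S ^ 3), sum_zmod2]
    simp_rw [wgt_cons, eps_zero, eps_one]
    have : ∀ w : ℝ, (1 + w)^3 + (-1 + w)^3 = 6 * w + 2 * w^3 := by intro w; ring
    rw [← Finset.sum_add_distrib]
    simp_rw [this]
    rw [Finset.sum_add_distrib, ← Finset.mul_sum, ← Finset.mul_sum, ih, P1]
    ring

lemma P4 (n : ℕ) : ∑ S : Fin n → ZMod 2, (wgt S) ^ 4 = (3 * n^2 - 2 * n) * 2 ^ n := by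
  induction n with
  | zero => simp [wgt]
  | succ n ih =>
    rw [sum_cons n (fun S => wgt S ^ 4), sum_zmod2]
    simp_rw [wgt_cons, eps_zero, eps_one]
    have : ∀ w : ℝ, (1 + w)^4 + (-1 + w)^4 = 2 + 12 * w^2 + 2 * w^4 := by intro w; ring
    rw [← Finset.sum_add_distrib]
    simp_rw [this]
    rw [Finset.sum_add_distrib, Finset.sum_add_distrib, ← Finset.mul_sum, ← Finset.mul_sum,
      ih, P2, Pconst]
    push_cast
    ring

lemma Bsum (n : ℕ) : ∑ S : Fin n → ZMod 2, (1 + wgt S) ^ 2 = ((n:ℝ) + 1) * 2 ^ n := by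
  have : ∀ w : ℝ, (1 + w)^2 = 1 + 2 * w + w^2 := by intro w; ring
  simp_rw [this]
  rw [Finset.sum_add_distrib, Finset.sum_add_distrib, ← Finset.mul_sum, P0, P1, P2]
  ring

lemma Csum (n : ℕ) : ∑ S : Fin n → ZMod 2, (1 + wgt S) ^ 4 = ((n:ℝ) + 1) * (3 * n + 1) * 2 ^ n := by
  have : ∀ w : ℝ, (1 + w)^4 = 1 + 4 * w + 6 * w^2 + 4 * w^3 + w^4 := by intro w; ring
  simp_rw [this]
  rw [Finset.sum_add_distrib, Finset.sum_add_distrib, Finset.sum_add_distrib,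
    Finset.sum_add_distrib, ← Finset.mul_sum, ← Finset.mul_sum, ← Finset.mul_sum,
    P0, P1, P2, P3, P4]
  push_cast
  ring

lemma abs_fhat_ge {n : ℕ} (S : Fin n → ZMod 2) :
    2 * |1 + wgt S| / 2^n - (if S = 0 then (1:ℝ) else 0) ≤ |fhat (ballInd n) S| := by
  rw [fhat_ballInd]
  have h2 : (0:ℝ) < 2^n := by positivity
  by_cases hS : S = 0
  · rw [if_pos hS, if_pos hS]
    rw [abs_div, abs_of_pos h2]
    have h1 : 2 * |1 + wgt S| - (2:ℝ)^n ≤ |(2:ℝ)^n - 2*(1+wgt S)| := by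
      have := abs_sub_abs_le_abs_sub (2 * (1 + wgt S)) ((2:ℝ)^n)
      rw [abs_sub_comm] at this
      rw [abs_mul, abs_two, abs_of_pos h2] at this
      exact this
    calc 2 * |1 + wgt S| / 2^n - 1 = (2 * |1 + wgt S| - 2^n) / 2^n := by
          field_simp
      _ ≤ |(2:ℝ)^n - 2*(1+wgt S)| / 2^n := (div_le_div_iff_of_pos_right h2).mpr h1
  · rw [if_neg hS, if_neg hS, sub_zero, zero_sub, abs_div, abs_of_pos h2, abs_neg, abs_mul,
      abs_two]

lemma specNorm_ge (n : ℕ) :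
    2 * (∑ S : Fin n → ZMod 2, |1 + wgt S|) / 2^n - 1 ≤ specNorm (ballInd n) := by
  rw [specNorm]
  have h := Finset.sum_le_sum (fun S (_ : S ∈ (univ : Finset (Fin n → ZMod 2))) => abs_fhat_ge S)
  rw [Finset.sum_sub_distrib] at h
  rw [Finset.sum_ite_eq' univ (0 : Fin n → ZMod 2) (fun _ => (1:ℝ)), if_pos (mem_univ _)] at h
  calc 2 * (∑ S : Fin n → ZMod 2, |1 + wgt S|) / 2^n - 1
      = (∑ S : Fin n → ZMod 2, 2 * |1 + wgt S| / 2^n) - 1 := by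
        rw [Finset.mul_sum, Finset.sum_div]
    _ ≤ _ := h

lemma A_lower (n : ℕ) :
    2^n * Real.sqrt n / Real.sqrt 3 ≤ ∑ S : Fin n → ZMod 2, |1 + wgt S| := by
  set A := ∑ S : Fin n → ZMod 2, |1 + wgt S| with hA
  set D := ∑ S : Fin n → ZMod 2, |1 + wgt S| ^ 3 with hD
  have hA0 : 0 ≤ A := Finset.sum_nonneg fun S _ => abs_nonneg _
  have hD0 : 0 ≤ D := Finset.sum_nonneg fun S _ => pow_nonneg (abs_nonneg _) 3
  have hBAD : (((n:ℝ) + 1) * 2 ^ n) ^ 2 ≤ A * D := by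
    have cs := Finset.sum_mul_sq_le_sq_mul_sq univ
      (fun S : Fin n → ZMod 2 => Real.sqrt |1 + wgt S|)
      (fun S : Fin n → ZMod 2 => Real.sqrt |1 + wgt S| * |1 + wgt S|)
    have e1 : ∀ S : Fin n → ZMod 2,
        Real.sqrt |1 + wgt S| * (Real.sqrt |1 + wgt S| * |1 + wgt S|) = (1 + wgt S) ^ 2 := by
      intro S
      rw [← mul_assoc, Real.mul_self_sqrt (abs_nonneg _), abs_mul_abs_self, sq]
    have e2 : ∀ S : Fin n → ZMod 2, (Real.sqrt |1 + wgt S|) ^ 2 = |1 + wgt S| := fun S =>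
      Real.sq_sqrt (abs_nonneg _)
    have e3 : ∀ S : Fin n → ZMod 2,
        (Real.sqrt |1 + wgt S| * |1 + wgt S|) ^ 2 = |1 + wgt S| ^ 3 := by
      intro S
      rw [mul_pow, Real.sq_sqrt (abs_nonneg _)]
      ring
    simp_rw [e1, e2, e3] at cs
    rwa [Bsum] at cs
  have hDBC : D ^ 2 ≤ (((n:ℝ) + 1) * 2 ^ n) * (((n:ℝ) + 1) * (3 * n + 1) * 2 ^ n) := by
    have cs := Finset.sum_mul_sq_le_sq_mul_sq univ
      (fun S : Fin n → ZMod 2 => |1 + wgt S|)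
      (fun S : Fin n → ZMod 2 => (1 + wgt S) ^ 2)
    have e1 : ∀ S : Fin n → ZMod 2, |1 + wgt S| * (1 + wgt S) ^ 2 = |1 + wgt S| ^ 3 := by
      intro S
      rw [← sq_abs]
      ring
    have e2 : ∀ S : Fin n → ZMod 2, |1 + wgt S| ^ 2 = (1 + wgt S) ^ 2 := fun S => sq_abs _
    have e3 : ∀ S : Fin n → ZMod 2, ((1 + wgt S) ^ 2) ^ 2 = (1 + wgt S) ^ 4 := by
      intro S; ring
    simp_rw [e1, e2, e3] at cs
    rwa [Bsum, Csum] at cs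
  -- combine
  have hBpos : (0:ℝ) < ((n:ℝ) + 1) * 2 ^ n := by positivity
  have hCpos : (0:ℝ) < ((n:ℝ) + 1) * (3 * (n:ℝ) + 1) * 2 ^ n := by positivity
  have key : ((2:ℝ)^n) ^ 2 * (n:ℝ) / 3 ≤ A ^ 2 := by
    nlinarith [sq_nonneg A, sq_nonneg D, mul_pos hBpos hCpos, Nat.cast_nonneg (α := ℝ) n,
      pow_pos (show (0:ℝ) < 2 by norm_num) n]
  have lhs_sq : (2^n * Real.sqrt n / Real.sqrt 3) ^ 2 = ((2:ℝ)^n) ^ 2 * (n:ℝ) / 3 := by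
    rw [div_pow, mul_pow, Real.sq_sqrt (Nat.cast_nonneg n), Real.sq_sqrt (by norm_num : (0:ℝ) ≤ 3)]
  refine le_of_pow_le_pow_left₀ (two_ne_zero) hA0 ?_
  rw [lhs_sq]
  exact key

theorem stmt17 : ∃ c : ℝ, 0 < c ∧ ∀ n : ℕ, c * Real.sqrt n ≤ specNorm (ballInd n) := by
  refine ⟨1/10, by norm_num, fun n => ?_⟩
  rcases Nat.eq_zero_or_pos n with hn | hn
  · subst hn
    simp only [Nat.cast_zero, Real.sqrt_zero, mul_zero]
    rw [specNorm]
    exact Finset.sum_nonneg fun S _ => abs_nonneg _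
  · have h2 : (0:ℝ) < 2^n := by positivity
    have hs1 : (1:ℝ) ≤ Real.sqrt n := by
      rw [show (1:ℝ) = Real.sqrt 1 by rw [Real.sqrt_one]]
      exact Real.sqrt_le_sqrt (by exact_mod_cast hn)
    have hs3 : Real.sqrt 3 ≤ 20/11 := by
      rw [show (20:ℝ)/11 = Real.sqrt ((20/11)^2) by rw [Real.sqrt_sq (by norm_num)]]
      exact Real.sqrt_le_sqrt (by norm_num)
    have hs3' : (0:ℝ) < Real.sqrt 3 := Real.sqrt_pos.mpr (by norm_num)
    have h1 := specNorm_ge n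
    have h2' := A_lower n
    have step : 2 * (2^n * Real.sqrt n / Real.sqrt 3) / 2^n - 1 ≤ specNorm (ballInd n) := by
      refine le_trans ?_ h1
      have : 2 * (2^n * Real.sqrt n / Real.sqrt 3) ≤ 2 * (∑ S : Fin n → ZMod 2, |1 + wgt S|) := by
        linarith
      calc 2 * (2^n * Real.sqrt n / Real.sqrt 3) / 2^n - 1
          ≤ 2 * (∑ S : Fin n → ZMod 2, |1 + wgt S|) / 2^n - 1 := by
            have := (div_le_div_iff_of_pos_right h2).mpr this
            linarith
        _ = _ := rfl
    have simp1 : 2 * (2^n * Real.sqrt n / Real.sqrt 3) / 2^n = 2 * Real.sqrt n / Real.sqrt 3 := by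
      field_simp
    rw [simp1] at step
    refine le_trans ?_ step
    have key : (1/10) * Real.sqrt n ≤ 2 * Real.sqrt n / Real.sqrt 3 - 1 := by
      rw [le_sub_iff_add_le, ← sub_nonneg]
      have expand : 2 * Real.sqrt n / Real.sqrt 3 - (1/10 * Real.sqrt n + 1)
          = (2 * Real.sqrt n - (1/10 * Real.sqrt n + 1) * Real.sqrt 3) / Real.sqrt 3 := by
        field_simp
      rw [expand]
      apply div_nonneg _ hs3'.le
      nlinarith
    exact key
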